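/- Let {a_k} ⊂ ℝ be a sequence converging to a_∞, and let {x_k} ⊂ ℝ be a sequence converging to x_∞ satisfying x_{k+1} − x_k = a_k / k² for all k ≥ 1. Then lim_{k→∞} k (x_∞ − x_k) = a_∞. In particular, if a_∞ ≠ 0, then there exist constants c₁, c₂ > 0 and N ∈ ℕ such that c₁ k^{−1} ≤ |x_∞ − x_k| ≤ c₂ k^{−1} for all k ≥ N. -/

import Mathlib

set_option maxHeartbeats 800000

open Filter Topology

private lemma tele (k : ℕ) (hk : 1 ≤ k) :
    HasSum (fun j : ℕ => (((k + j : ℕ) : ℝ))⁻¹ - (((k + j + 1 : ℕ) : ℝ))⁻¹) ((k : ℝ))⁻¹ := by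
  have hpos : ∀ j : ℕ, (0:ℝ) < ((k + j : ℕ) : ℝ) := fun j => by
    exact_mod_cast Nat.lt_of_lt_of_le Nat.zero_lt_one (le_trans hk (Nat.le_add_right k j))
  rw [hasSum_iff_tendsto_nat_of_nonneg]
  · have hsum : ∀ n, ∑ i ∈ Finset.range n, ((((k + i : ℕ):ℝ))⁻¹ - (((k + i + 1 : ℕ):ℝ))⁻¹)
        = ((k:ℝ))⁻¹ - (((k + n : ℕ):ℝ))⁻¹ := by
      intro n
      have := Finset.sum_range_sub' (fun i => (((k + i : ℕ):ℝ))⁻¹) n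
      simpa [add_assoc] using this
    simp only [hsum]
    have h0 : Tendsto (fun n : ℕ => ((k + n : ℕ):ℝ)) atTop atTop := by
      apply tendsto_atTop_mono (fun n => ?_) tendsto_natCast_atTop_atTop
      exact_mod_cast Nat.le_add_left n k
    have h1 := h0.inv_tendsto_atTop
    simpa using tendsto_const_nhds.sub h1
  · intro i
    have h1 : ((k + i : ℕ):ℝ) ≤ ((k + i + 1 : ℕ):ℝ) := by exact_mod_cast Nat.le_succ _
    have := inv_anti₀ (hpos i) h1
    linarith

private lemma pointEq (A : ℝ) (hA : 0 < A) : A⁻¹ - (A+1)⁻¹ = (A*(A+1))⁻¹ := by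
  field_simp
  ring

private lemma S2 (k : ℕ) : Summable (fun j : ℕ => ((((k + j : ℕ):ℝ))^2)⁻¹) := by
  have h : Summable (fun n : ℕ => ((n:ℝ)^2)⁻¹) := by
    simpa [one_div] using Real.summable_one_div_nat_pow.2 (by norm_num : 1 < 2)
  have := (summable_nat_add_iff k).2 h
  simpa [add_comm] using this

private lemma Tlow (k : ℕ) (hk : 1 ≤ k) :
    ((k:ℝ))⁻¹ ≤ ∑' j : ℕ, ((((k + j : ℕ):ℝ))^2)⁻¹ := by
  rw [← (tele k hk).tsum_eq]
  apply Summable.tsum_le_tsum _ (tele k hk).summable (S2 k)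
  intro j
  have hA : (0:ℝ) < ((k + j : ℕ) : ℝ) := by
    exact_mod_cast Nat.lt_of_lt_of_le Nat.zero_lt_one (le_trans hk (Nat.le_add_right k j))
  set A : ℝ := ((k + j : ℕ) : ℝ) with hAdef
  have hcast : (((k + j + 1 : ℕ)):ℝ) = A + 1 := by push_cast [hAdef]; ring
  rw [hcast, pointEq A hA]
  exact inv_anti₀ (by positivity) (by nlinarith)

private lemma Thigh (k : ℕ) (hk : 1 ≤ k) :
    (∑' j : ℕ, ((((k + 1 + j : ℕ):ℝ))^2)⁻¹) ≤ ((k:ℝ))⁻¹ := by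
  rw [← (tele k hk).tsum_eq]
  apply Summable.tsum_le_tsum _ (S2 (k+1)) (tele k hk).summable
  intro j
  have hA : (0:ℝ) < ((k + j : ℕ) : ℝ) := by
    exact_mod_cast Nat.lt_of_lt_of_le Nat.zero_lt_one (le_trans hk (Nat.le_add_right k j))
  set A : ℝ := ((k + j : ℕ) : ℝ) with hAdef
  have hcast : (((k + j + 1 : ℕ)):ℝ) = A + 1 := by push_cast [hAdef]; ring
  have hcast2 : (((k + 1 + j : ℕ)):ℝ) = A + 1 := by push_cast [hAdef]; ring
  rw [hcast, hcast2, pointEq A hA]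
  exact inv_anti₀ (by positivity) (by nlinarith)


/-- (L5) Let `a_k → a_∞` and let `x_k → x_∞` satisfy `x_{k+1} − x_k = a_k / k²` for all
`k ≥ 1`. Then `lim k (x_∞ − x_k) = a_∞`; in particular, if `a_∞ ≠ 0`, then
`|x_∞ − x_k| = Θ(k^{−1})`. -/
theorem stmt10 (a : ℕ → ℝ) (ainf : ℝ) (ha : Tendsto a atTop (𝓝 ainf))
    (x : ℕ → ℝ) (xinf : ℝ) (hx : Tendsto x atTop (𝓝 xinf))
    (hrec : ∀ k, 1 ≤ k → x (k + 1) - x k = a k / (k : ℝ) ^ 2) :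
    Tendsto (fun k : ℕ => (k : ℝ) * (xinf - x k)) atTop (𝓝 ainf)
    ∧ (ainf ≠ 0 →
        ∃ c₁ c₂ : ℝ, 0 < c₁ ∧ 0 < c₂ ∧ ∃ N : ℕ, ∀ k, N ≤ k →
          c₁ * ((k : ℝ))⁻¹ ≤ |xinf - x k| ∧ |xinf - x k| ≤ c₂ * ((k : ℝ))⁻¹) := by
  -- bound on a
  obtain ⟨C, hC⟩ : ∃ C, ∀ n, |a n| ≤ C := by
    obtain ⟨C, hC⟩ := (ha.abs).bddAbove_range
    exact ⟨C, fun n => hC ⟨n, rfl⟩⟩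
  -- summability of the series terms
  have hSa : ∀ k : ℕ, 1 ≤ k → Summable (fun j : ℕ => a (k + j) / ((k + j : ℕ) : ℝ) ^ 2) := by
    intro k hk
    apply Summable.of_norm_bounded ((S2 k).mul_left C)
    intro j
    rw [Real.norm_eq_abs, abs_div, abs_of_nonneg (by positivity : (0:ℝ) ≤ ((k+j:ℕ):ℝ)^2),
      div_eq_mul_inv]
    exact mul_le_mul_of_nonneg_right (hC _) (by positivity)
  -- identity: xinf - x k = tail sum
  have hD : ∀ k : ℕ, 1 ≤ k → xinf - x k = ∑' j : ℕ, a (k + j) / ((k + j : ℕ) : ℝ) ^ 2 := by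
    intro k hk
    have hps : ∀ n, ∑ i ∈ Finset.range n, a (k + i) / ((k + i : ℕ) : ℝ) ^ 2
        = x (k + n) - x k := by
      intro n
      induction n with
      | zero => simp
      | succ n ih =>
        rw [Finset.sum_range_succ, ih, ← add_assoc]
        have := hrec (k + n) (le_trans hk (Nat.le_add_right k n))
        linarith [this]
    have h1 : Tendsto (fun n => x (k + n) - x k) atTop (𝓝 (xinf - x k)) := by
      have hmono : Tendsto (fun n : ℕ => k + n) atTop atTop :=
        tendsto_atTop_mono (fun n => Nat.le_add_left n k) tendsto_id
      exact (hx.comp hmono).sub tendsto_const_nhds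
    have h2 := (hSa k hk).hasSum.tendsto_sum_nat
    simp only [hps] at h2
    exact (tendsto_nhds_unique h2 h1).symm
  -- main limit
  have hmain : Tendsto (fun k : ℕ => (k : ℝ) * (xinf - x k)) atTop (𝓝 ainf) := by
    rw [Metric.tendsto_atTop]
    intro ε hε
    obtain ⟨K₁, hK₁⟩ := Metric.tendsto_atTop.1 ha (ε/4) (by positivity)
    obtain ⟨N₂, hN₂⟩ := exists_nat_gt (4 * |ainf| / ε + 1)
    refine ⟨max (max K₁ 2) N₂, fun k hk => ?_⟩
    have hkK₁ : K₁ ≤ k := le_trans (le_trans (le_max_left _ _) (le_max_left _ _)) hk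
    have hk2 : 2 ≤ k := le_trans (le_trans (le_max_right _ _) (le_max_left _ _)) hk
    have hkN₂ : N₂ ≤ k := le_trans (le_max_right _ _) hk
    have hk1 : 1 ≤ k := le_trans (by norm_num) hk2
    have hK2 : (2:ℝ) ≤ (k:ℝ) := by exact_mod_cast hk2
    set K : ℝ := (k : ℝ) with hKdef
    have hK0 : (0:ℝ) < K := by linarith
    have hKm : (0:ℝ) < K - 1 := by linarith
    have hKN : 4 * |ainf| ≤ ε * (K - 1) := by
      have h1 : 4 * |ainf| / ε + 1 < K := by
        rw [hKdef]
        exact lt_of_lt_of_le hN₂ (by exact_mod_cast hkN₂)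
      have h2 : 4 * |ainf| / ε < K - 1 := by linarith
      calc 4 * |ainf| = (4 * |ainf| / ε) * ε := by field_simp
        _ ≤ (K - 1) * ε := mul_le_mul_of_nonneg_right h2.le hε.le
        _ = ε * (K - 1) := mul_comm _ _
    set u : ℝ := ∑' j : ℕ, ((((k + j : ℕ) : ℝ)) ^ 2)⁻¹ with hudef
    have hu1 : K⁻¹ ≤ u := Tlow k hk1
    have hu2 : u ≤ (K - 1)⁻¹ := by
      have h := Thigh (k - 1) (by omega)
      have hkk : k - 1 + 1 = k := by omega
      rw [hkk] at h
      have hc : (((k - 1 : ℕ)) : ℝ) = K - 1 := by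
        rw [hKdef]; push_cast [Nat.cast_sub hk1]; ring
      rwa [hc] at h
    have h1 : u * (K - 1) ≤ 1 := by
      calc u * (K - 1) ≤ (K - 1)⁻¹ * (K - 1) := mul_le_mul_of_nonneg_right hu2 hKm.le
        _ = 1 := inv_mul_cancel₀ hKm.ne'
    have h2 : (1:ℝ) ≤ u * K := by
      calc (1:ℝ) = K⁻¹ * K := (inv_mul_cancel₀ hK0.ne').symm
        _ ≤ u * K := mul_le_mul_of_nonneg_right hu1 hK0.le
    -- middle estimate
    set D : ℝ := xinf - x k with hDdef
    have hmid : |D - ainf * u| ≤ ε / 4 * u := by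
      have hf := hSa k hk1
      have hg : Summable (fun j : ℕ => ainf * ((((k + j : ℕ) : ℝ)) ^ 2)⁻¹) :=
        (S2 k).mul_left ainf
      set F : ℕ → ℝ := fun j : ℕ =>
        a (k + j) / ((k + j : ℕ) : ℝ) ^ 2 - ainf * ((((k + j : ℕ) : ℝ)) ^ 2)⁻¹ with hFdef
      have hh : Summable F := hf.sub hg
      have hhabs : Summable (fun j : ℕ => |F j|) := hh.abs
      have heq : D - ainf * u = ∑' j : ℕ, F j := by
        rw [hDdef, hD k hk1, hudef, hFdef, Summable.tsum_sub hf hg, tsum_mul_left]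
      rw [heq]
      have habs : ∀ j : ℕ, |F j| ≤ ε / 4 * ((((k + j : ℕ) : ℝ)) ^ 2)⁻¹ := by
        intro j
        have hdist : |a (k + j) - ainf| ≤ ε / 4 := by
          have := hK₁ (k + j) (le_trans hkK₁ (Nat.le_add_right k j))
          rw [Real.dist_eq] at this
          linarith
        rw [hFdef]
        simp only
        rw [div_eq_mul_inv, ← sub_mul, abs_mul,
          abs_of_nonneg (by positivity : (0:ℝ) ≤ ((((k + j : ℕ) : ℝ)) ^ 2)⁻¹)]
        exact mul_le_mul_of_nonneg_right hdist (by positivity)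
      have hnorm : Summable (fun j : ℕ => ‖F j‖) := by
        simpa only [Real.norm_eq_abs] using hhabs
      have step1 : |∑' j : ℕ, F j| ≤ ∑' j : ℕ, |F j| := by
        simpa only [Real.norm_eq_abs] using norm_tsum_le_tsum_norm (f := F) hnorm
      have step2 : ∑' j : ℕ, |F j| ≤ ∑' j : ℕ, ε / 4 * ((((k + j : ℕ) : ℝ)) ^ 2)⁻¹ :=
        Summable.tsum_le_tsum habs hhabs ((S2 k).mul_left (ε/4))
      have step3 : ∑' j : ℕ, ε / 4 * ((((k + j : ℕ) : ℝ)) ^ 2)⁻¹ = ε / 4 * u := by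
        rw [tsum_mul_left, hudef]
      linarith
    -- assemble
    rw [Real.dist_eq]
    have hsplit : K * D - ainf = K * (D - ainf * u) + ainf * (K * u - 1) := by ring
    have hKu0 : (0:ℝ) ≤ K * u - 1 := by nlinarith
    have e3 : |ainf| * (K * u - 1) ≤ ε / 4 := by
      have h3 : (K * u - 1) * (K - 1) ≤ 1 := by nlinarith
      nlinarith [abs_nonneg ainf, mul_le_mul_of_nonneg_left h3 (abs_nonneg ainf)]
    have hKu2 : K * u ≤ 2 := by
      have h4 : K * u * (K - 1) ≤ 2 * (K - 1) := by
        nlinarith [mul_le_mul_of_nonneg_left h1 hK0.le]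
      exact (mul_le_mul_iff_of_pos_right hKm).1 h4
    have e4 : K * (ε / 4 * u) ≤ ε / 2 := by
      nlinarith [mul_le_mul_of_nonneg_left hKu2 (le_of_lt hε)]
    calc |K * D - ainf| = |K * (D - ainf * u) + ainf * (K * u - 1)| := by rw [hsplit]
      _ ≤ |K * (D - ainf * u)| + |ainf * (K * u - 1)| := abs_add_le _ _
      _ = K * |D - ainf * u| + |ainf| * (K * u - 1) := by
          rw [abs_mul, abs_mul, abs_of_nonneg hK0.le, abs_of_nonneg hKu0]
      _ ≤ K * (ε / 4 * u) + ε / 4 :=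
          add_le_add (mul_le_mul_of_nonneg_left hmid hK0.le) e3
      _ ≤ ε / 2 + ε / 4 := by linarith
      _ < ε := by linarith
  refine ⟨hmain, fun hane => ?_⟩
  have hpos : 0 < |ainf| := abs_pos.2 hane
  obtain ⟨N, hN⟩ := Metric.tendsto_atTop.1 hmain.abs (|ainf| / 2) (by positivity)
  refine ⟨|ainf| / 2, 2 * |ainf|, by positivity, by positivity, max N 1, fun k hk => ?_⟩
  have hk1 : 1 ≤ k := le_trans (le_max_right N 1) hk
  have hkN : N ≤ k := le_trans (le_max_left N 1) hk
  have hK0 : (0:ℝ) < (k : ℝ) := by exact_mod_cast hk1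
  have hd := hN k hkN
  rw [Real.dist_eq] at hd
  have hd2 := abs_lt.1 hd
  have hke : |(k : ℝ) * (xinf - x k)| = (k : ℝ) * |xinf - x k| := by
    rw [abs_mul, abs_of_pos hK0]
  rw [hke] at hd2
  constructor
  · rw [show |ainf| / 2 * ((k:ℝ))⁻¹ = |ainf| / 2 / (k:ℝ) from (div_eq_mul_inv _ _).symm,
      div_le_iff₀ hK0]
    nlinarith [hd2.1]
  · rw [show 2 * |ainf| * ((k:ℝ))⁻¹ = 2 * |ainf| / (k:ℝ) from (div_eq_mul_inv _ _).symm,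
      le_div_iff₀ hK0]
    nlinarith [hd2.2]
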